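/- Let λ ∈ ℂ with λ ≠ 1 and 0 < |Log λ| < 2π (Log the principal branch), let x ∈ ℂ, and let r ≥ 1 and n ≥ 0 be integers. Then the series ∑_{l=0}^{∞} B_{n+l}^{(r)}(x)·(Log λ)^l/l! converges absolutely and B_n^{(r)}(λ; x) = e^{−x·Log λ}·∑_{l=0}^{∞} B_{n+l}^{(r)}(x)·(Log λ)^l/l! (here B_m^{(r)}(x) are the ordinary Bernoulli polynomials of order r). -/

import Mathlib

open Filter Finset
open scoped Topology Real

namespace LamBerAux


lemma ofScalars_coeff (c : ℕ → ℂ) (m : ℕ) :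
    (FormalMultilinearSeries.ofScalars ℂ c).coeff m = c m := by
  show FormalMultilinearSeries.ofScalars ℂ c m (fun _ => (1:ℂ)) = c m
  rw [FormalMultilinearSeries.ofScalars_apply_eq]
  simp

/-- `f` is represented by the power series `φ` near `0`. -/
def Rep (φ : PowerSeries ℂ) (f : ℂ → ℂ) : Prop :=
  ∀ᶠ z in 𝓝 (0 : ℂ), HasSum (fun m : ℕ => (PowerSeries.coeff m φ) * z ^ m) (f z)

lemma Rep.congr {φ : PowerSeries ℂ} {f g : ℂ → ℂ} (h : Rep φ f)
    (hfg : ∀ᶠ z in 𝓝 (0 : ℂ), f z = g z) : Rep φ g := by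
  filter_upwards [h, hfg] with z h1 h2
  exact h2 ▸ h1

lemma Rep.hasFPowerSeriesAt {φ : PowerSeries ℂ} {f : ℂ → ℂ} (h : Rep φ f) :
    HasFPowerSeriesAt f
      (FormalMultilinearSeries.ofScalars ℂ (fun m => PowerSeries.coeff m φ)) 0 := by
  rw [hasFPowerSeriesAt_iff]
  filter_upwards [h] with z hz
  simp only [ofScalars_coeff, zero_add, smul_eq_mul]
  exact hz.congr_fun fun m => mul_comm _ _

lemma Rep.unique {φ ψ : PowerSeries ℂ} {f : ℂ → ℂ} (h1 : Rep φ f) (h2 : Rep ψ f) : φ = ψ := by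
  have := h1.hasFPowerSeriesAt.eq_formalMultilinearSeries h2.hasFPowerSeriesAt
  ext m
  have hm := congrArg (fun p : FormalMultilinearSeries ℂ ℂ ℂ => p.coeff m) this
  simpa only [ofScalars_coeff] using hm

lemma Rep.mul {φ ψ : PowerSeries ℂ} {f g : ℂ → ℂ} (h1 : Rep φ f) (h2 : Rep ψ g) :
    Rep (φ * ψ) (fun z => f z * g z) := by
  filter_upwards [h1, h2] with z hf hg
  have hf' : Summable fun m => ‖PowerSeries.coeff m φ * z ^ m‖ :=
    summable_norm_iff.mpr hf.summable
  have hg' : Summable fun m => ‖PowerSeries.coeff m ψ * z ^ m‖ :=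
    summable_norm_iff.mpr hg.summable
  have hs : Summable fun m : ℕ => ∑ kl ∈ antidiagonal m,
      (PowerSeries.coeff kl.1 φ * z ^ kl.1) * (PowerSeries.coeff kl.2 ψ * z ^ kl.2) :=
    by
    have := summable_norm_sum_mul_antidiagonal_of_summable_norm hf' hg'
    exact summable_norm_iff.mp this
  have ht := tsum_mul_tsum_eq_tsum_sum_antidiagonal_of_summable_norm hf' hg'
  rw [hf.tsum_eq, hg.tsum_eq] at ht
  have key : (fun m : ℕ => (PowerSeries.coeff m (φ * ψ)) * z ^ m)
      = fun m : ℕ => ∑ kl ∈ antidiagonal m,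
        (PowerSeries.coeff kl.1 φ * z ^ kl.1) * (PowerSeries.coeff kl.2 ψ * z ^ kl.2) := by
    funext m
    rw [PowerSeries.coeff_mul, Finset.sum_mul]
    refine Finset.sum_congr rfl fun kl hkl => ?_
    have : kl.1 + kl.2 = m := Finset.HasAntidiagonal.mem_antidiagonal.mp hkl
    rw [← this, pow_add]; ring
  rw [key]
  exact hs.hasSum_iff.mpr ht.symm

lemma Rep.one : Rep 1 (fun _ => 1) := by
  refine Eventually.of_forall fun z => ?_
  have := hasSum_single (f := fun m : ℕ => (PowerSeries.coeff m 1) * z ^ m) 0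
    (fun b hb => by simp [PowerSeries.coeff_one, hb])
  simpa using this

lemma Rep.pow {φ : PowerSeries ℂ} {f : ℂ → ℂ} (h : Rep φ f) (r : ℕ) :
    Rep (φ ^ r) (fun z => f z ^ r) := by
  induction r with
  | zero => simpa using Rep.one
  | succ k ih =>
    have := ih.mul h
    simpa [pow_succ] using this

lemma Rep.sub {φ ψ : PowerSeries ℂ} {f g : ℂ → ℂ} (h1 : Rep φ f) (h2 : Rep ψ g) :
    Rep (φ - ψ) (fun z => f z - g z) := by
  filter_upwards [h1, h2] with z hf hg
  simpa [sub_mul] using hf.sub hg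

lemma Rep.add {φ ψ : PowerSeries ℂ} {f g : ℂ → ℂ} (h1 : Rep φ f) (h2 : Rep ψ g) :
    Rep (φ + ψ) (fun z => f z + g z) := by
  filter_upwards [h1, h2] with z hf hg
  simpa [add_mul] using hf.add hg

lemma rep_C (a : ℂ) : Rep (PowerSeries.C a) (fun _ => a) := by
  refine Eventually.of_forall fun z => ?_
  have := hasSum_single (f := fun m : ℕ => (PowerSeries.coeff m (PowerSeries.C a)) * z ^ m) 0
    (fun b hb => by simp [PowerSeries.coeff_C, hb])
  simpa using this

lemma rep_X : Rep (PowerSeries.X : PowerSeries ℂ) (fun z => z) := by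
  refine Eventually.of_forall fun z => ?_
  have := hasSum_single (f := fun m : ℕ => (PowerSeries.coeff m PowerSeries.X) * z ^ m) 1
    (fun b hb => by simp [PowerSeries.coeff_X, hb])
  simpa [PowerSeries.coeff_X] using this

lemma hasSum_cexp (z : ℂ) : HasSum (fun m : ℕ => z ^ m / m.factorial) (Complex.exp z) := by
  rw [Complex.exp_eq_exp_ℂ]; exact NormedSpace.expSeries_div_hasSum_exp z

lemma rep_exp_mul (a : ℂ) :
    Rep (PowerSeries.mk fun m => a ^ m / (m.factorial : ℂ)) (fun z => Complex.exp (a * z)) := by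
  refine Eventually.of_forall fun z => ?_
  have := hasSum_cexp (a * z)
  refine this.congr_fun fun m => ?_
  rw [PowerSeries.coeff_mk, mul_pow, div_mul_eq_mul_div]

lemma rep_exp : Rep (PowerSeries.exp ℂ) Complex.exp := by
  refine Eventually.of_forall fun z => ?_
  refine (hasSum_cexp z).congr_fun fun m => ?_
  rw [PowerSeries.coeff_exp]
  push_cast
  rw [div_mul_eq_mul_div, one_mul]

lemma rep_of_hasFPowerSeriesAt {f : ℂ → ℂ} {q : FormalMultilinearSeries ℂ ℂ ℂ}
    (h : HasFPowerSeriesAt f q 0) : Rep (PowerSeries.mk fun m => q.coeff m) f := by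
  rw [hasFPowerSeriesAt_iff] at h
  filter_upwards [h] with z hz
  simp only [zero_add, smul_eq_mul] at hz
  refine hz.congr_fun fun m => ?_
  rw [PowerSeries.coeff_mk, mul_comm]



noncomputable def dcoef : ℕ → ℂ := fun k => (((k + 1).factorial : ℕ) : ℂ)⁻¹

lemma dcoef_ne (k : ℕ) : dcoef k ≠ 0 := by
  simp [dcoef, Nat.factorial_ne_zero]

noncomputable def p1 : FormalMultilinearSeries ℂ ℂ ℂ :=
  FormalMultilinearSeries.ofScalars ℂ dcoef

lemma p1_radius : p1.radius = ⊤ := by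
  apply FormalMultilinearSeries.ofScalars_radius_eq_top_of_tendsto
  · exact Eventually.of_forall dcoef_ne
  · have key : ∀ n : ℕ, ‖dcoef n.succ / dcoef n‖ = (((n : ℝ) + 2))⁻¹ := by
      intro n
      have h2 : dcoef n.succ / dcoef n = (((n : ℂ) + 2))⁻¹ := by
        rw [dcoef, dcoef]
        rw [show (n.succ + 1).factorial = (n + 2) * (n + 1).factorial from by
          rw [Nat.factorial_succ]]
        have h1 : (((n + 1).factorial : ℕ) : ℂ) ≠ 0 := by
          exact_mod_cast Nat.cast_ne_zero.mpr (n + 1).factorial_ne_zero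
        push_cast
        rw [mul_inv, div_eq_mul_inv, inv_inv, mul_assoc, inv_mul_cancel₀ h1, mul_one]
      rw [h2, norm_inv]
      have : ‖((n : ℂ) + 2)‖ = (n : ℝ) + 2 := by
        rw [show ((n : ℂ) + 2) = (((n : ℝ) + 2 : ℝ) : ℂ) from by push_cast; ring]
        rw [Complex.norm_real]
        rw [Real.norm_eq_abs, abs_of_nonneg (by positivity)]
      rw [this]
    have keyf : (fun n : ℕ => ‖dcoef n.succ‖ / ‖dcoef n‖) = fun n : ℕ => (((n : ℝ) + 2))⁻¹ := by
      funext n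
      rw [← norm_div, key n]
    rw [keyf]
    have h3 : Tendsto (fun n : ℕ => ((n : ℝ) + 2)) atTop atTop :=
      tendsto_atTop_add_const_right _ 2 tendsto_natCast_atTop_atTop
    exact h3.inv_tendsto_atTop

noncomputable def dfun : ℂ → ℂ := p1.sum

lemma hd_ball : HasFPowerSeriesOnBall dfun p1 0 ⊤ := by
  have := p1.hasFPowerSeriesOnBall (by rw [p1_radius]; exact ENNReal.zero_lt_top)
  rwa [p1_radius] at this

lemma hd_sum (z : ℂ) : HasSum (fun k : ℕ => dcoef k * z ^ k) (dfun z) := by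
  have := hd_ball.hasSum (y := z) (by simp [EMetric.mem_ball, edist_lt_top])
  simp only [zero_add] at this
  refine this.congr_fun fun k => ?_
  have : p1 k (fun _ => z) = dcoef k • z ^ k :=
    FormalMultilinearSeries.ofScalars_apply_eq dcoef z k
  rw [this, smul_eq_mul]

lemma dfun_zero : dfun 0 = 1 := by
  have h := hd_sum 0
  have h2 := hasSum_single (f := fun k : ℕ => dcoef k * (0:ℂ) ^ k) 0
    (fun b hb => by simp [zero_pow hb])
  have := h.unique h2
  rw [this]
  simp [dcoef]

lemma z_mul_dfun (z : ℂ) : z * dfun z = Complex.exp z - 1 := by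
  have h1 : HasSum (fun k : ℕ => z ^ (k + 1) / ((k + 1).factorial : ℂ)) (z * dfun z) := by
    refine ((hd_sum z).mul_left z).congr_fun fun k => ?_
    rw [dcoef, pow_succ]
    field_simp
  have h2 : HasSum (fun m : ℕ => z ^ m / m.factorial) (Complex.exp z) := by
    rw [Complex.exp_eq_exp_ℂ]; exact NormedSpace.expSeries_div_hasSum_exp z
  have h3 : HasSum (fun k : ℕ => z ^ (k + 1) / ((k + 1).factorial : ℂ))
      (Complex.exp z - ∑ i ∈ range 1, z ^ i / (i.factorial : ℂ)) := by
    exact (hasSum_nat_add_iff' 1).mpr h2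
  simp only [range_one, sum_singleton, pow_zero, Nat.factorial_zero, Nat.cast_one, div_one]
    at h3
  exact h1.unique h3

lemma dfun_diff (z : ℂ) : DifferentiableAt ℂ dfun z :=
  (hd_ball.analyticAt_of_mem (by simp [EMetric.mem_ball, edist_lt_top])).differentiableAt

lemma dfun_ne {z : ℂ} (hz : ‖z‖ < 2 * π) : dfun z ≠ 0 := by
  rcases eq_or_ne z 0 with rfl | hz0
  · rw [dfun_zero]; exact one_ne_zero
  · intro h
    have : Complex.exp z - 1 = 0 := by rw [← z_mul_dfun, h, mul_zero]
    have hexp : Complex.exp z = 1 := by linear_combination this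
    obtain ⟨k, hk⟩ := Complex.exp_eq_one_iff.mp hexp
    have hk0 : k ≠ 0 := by
      rintro rfl
      rw [Int.cast_zero, zero_mul] at hk
      exact hz0 hk
    have : ‖z‖ = |(k : ℝ)| * (2 * π) := by
      rw [hk]
      rw [norm_mul, Complex.norm_intCast]
      congr 1
      rw [norm_mul, norm_mul, Complex.norm_ofNat, Complex.norm_real, Complex.norm_I,
        Real.norm_eq_abs, abs_of_nonneg Real.pi_pos.le, mul_one]
    rw [this] at hz
    have : (1 : ℝ) ≤ |(k : ℝ)| := by
      rw [← Int.cast_abs]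
      exact_mod_cast Int.one_le_abs (by simpa using hk0)
    nlinarith [Real.pi_pos]

noncomputable def Eps : PowerSeries ℂ := PowerSeries.mk fun k => dcoef k

lemma Eps_ne : Eps ≠ 0 := by
  intro h
  have := congrArg (PowerSeries.coeff 0) h
  simp [Eps, dcoef] at this

lemma X_mul_Eps : (PowerSeries.X : PowerSeries ℂ) * Eps = PowerSeries.exp ℂ - 1 := by
  ext m
  cases m with
  | zero =>
    simp [Eps, PowerSeries.coeff_zero_eq_constantCoeff, PowerSeries.constantCoeff_exp]
  | succ k =>
    rw [PowerSeries.coeff_succ_X_mul]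
    simp only [Eps, PowerSeries.coeff_mk, map_sub, PowerSeries.coeff_exp, dcoef]
    rw [PowerSeries.coeff_one]
    simp only [Nat.succ_ne_zero, if_false, sub_zero]
    push_cast
    rw [one_div]


lemma iteratedDeriv_const_mul'' (a : ℂ) (g : ℂ → ℂ) (n : ℕ) :
    iteratedDeriv n (fun t => a * g t) = fun t => a * iteratedDeriv n g t := by
  induction n with
  | zero => simp
  | succ k ih =>
    rw [iteratedDeriv_succ, ih, iteratedDeriv_succ]
    funext t
    exact deriv_const_mul_field a

lemma iteratedDeriv_iteratedDeriv (g : ℂ → ℂ) (n l : ℕ) :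
    iteratedDeriv l (iteratedDeriv n g) = iteratedDeriv (n + l) g := by
  induction l with
  | zero => simp
  | succ k ih =>
    rw [iteratedDeriv_succ, ih, ← iteratedDeriv_succ]
    congr 1

lemma coeff_from_ball {f : ℂ → ℂ} {q : FormalMultilinearSeries ℂ ℂ ℂ} {R : ENNReal}
    (h : HasFPowerSeriesOnBall f q 0 R) (m : ℕ) :
    iteratedDeriv m f 0 = (m.factorial : ℂ) * q.coeff m := by
  have hfs := h.factorial_smul (1 : ℂ) m
  rw [iteratedDeriv_eq_iteratedFDeriv]
  rw [← hfs]
  show (m.factorial : ℕ) • (q.coeff m) = (m.factorial : ℂ) * q.coeff m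
  rw [nsmul_eq_mul]

end LamBerAux
open LamBerAux Filter Finset Metric
open scoped Topology Real

theorem lambdaBernoulliPoly_order_r_eq_tsum (lam : ℂ) (h1 : lam ≠ 1)
    (hlog : 0 < ‖Complex.log lam‖)
    (hlog2 : ‖Complex.log lam‖ < 2 * Real.pi)
    (x : ℂ) (r : ℕ) (hr : 1 ≤ r) (n : ℕ) (B Bb : ℕ → ℂ)
    (hB : (PowerSeries.C (Complex.log lam) + PowerSeries.X) ^ r *
        PowerSeries.mk (fun m => x ^ m / (m.factorial : ℂ)) =
      (PowerSeries.C lam * PowerSeries.exp ℂ - 1) ^ r *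
        PowerSeries.mk (fun m => B m / (m.factorial : ℂ)))
    (hBb : (PowerSeries.X : PowerSeries ℂ) ^ r *
        PowerSeries.mk (fun m => x ^ m / (m.factorial : ℂ)) =
      (PowerSeries.exp ℂ - 1) ^ r *
        PowerSeries.mk (fun m => Bb m / (m.factorial : ℂ))) :
    Summable (fun l : ℕ => ‖Bb (n + l) * Complex.log lam ^ l / (l.factorial : ℂ)‖) ∧
    B n =
      Complex.exp (-x * Complex.log lam) *
        ∑' l : ℕ, Bb (n + l) * Complex.log lam ^ l / (l.factorial : ℂ) := by
  have hπ : (0 : ℝ) < 2 * π := by positivity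
  have hlam0 : lam ≠ 0 := by
    intro h
    rw [h, Complex.log_zero] at hlog
    simp at hlog
  set c : ℂ := Complex.log lam with hcdef
  have hexpc : Complex.exp c = lam := Complex.exp_log hlam0
  have hcnorm : ‖c‖ < 2 * π := hlog2
  -- the function G
  set G : ℂ → ℂ := fun z => Complex.exp (x * z) * ((dfun z) ^ r)⁻¹ with hGdef
  have hGdiff : ∀ z ∈ Metric.ball (0 : ℂ) (2 * π), DifferentiableAt ℂ G z := by
    intro z hz
    rw [Metric.mem_ball, dist_zero_right] at hz
    exact ((differentiableAt_id.const_mul x).cexp).mul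
      (((dfun_diff z).pow r).inv (pow_ne_zero r (dfun_ne hz)))
  have hGdiffOn : DifferentiableOn ℂ G (Metric.ball (0 : ℂ) (2 * π)) :=
    fun z hz => (hGdiff z hz).differentiableWithinAt
  set R : NNReal := Real.toNNReal π with hRdef
  have hRcoe : (R : ℝ) = π := Real.coe_toNNReal _ Real.pi_pos.le
  have hRpos : 0 < R := by
    rw [hRdef]
    exact Real.toNNReal_pos.mpr Real.pi_pos
  have hq : HasFPowerSeriesOnBall G (cauchyPowerSeries G 0 R) 0 R := by
    refine DifferentiableOn.hasFPowerSeriesOnBall ?_ hRpos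
    refine hGdiffOn.mono (Metric.closedBall_subset_ball ?_)
    rw [hRcoe]
    linarith [Real.pi_pos]
  set q : FormalMultilinearSeries ℂ ℂ ℂ := cauchyPowerSeries G 0 R with hqdef
  have repG : Rep (PowerSeries.mk fun m => q.coeff m) G :=
    rep_of_hasFPowerSeriesAt hq.hasFPowerSeriesAt
  have repd : Rep Eps dfun := by
    have h := rep_of_hasFPowerSeriesAt hd_ball.hasFPowerSeriesAt
    have he : (PowerSeries.mk fun m => p1.coeff m) = Eps := by
      ext m
      simp only [PowerSeries.coeff_mk, Eps, p1, ofScalars_coeff]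
    rwa [he] at h
  have e2 : ∀ᶠ z in 𝓝 (0 : ℂ), G z * (dfun z) ^ r = Complex.exp (x * z) := by
    filter_upwards [Metric.ball_mem_nhds (0 : ℂ) hπ] with z hz
    rw [Metric.mem_ball, dist_zero_right] at hz
    have hdz : dfun z ^ r ≠ 0 := pow_ne_zero r (dfun_ne hz)
    rw [hGdef]
    field_simp
  have e5 : (PowerSeries.mk fun m => q.coeff m) * Eps ^ r =
      PowerSeries.mk (fun m => x ^ m / (m.factorial : ℂ)) :=
    ((repG.mul (repd.pow r)).congr e2).unique (rep_exp_mul x)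
  have e6 : PowerSeries.mk (fun m => x ^ m / (m.factorial : ℂ)) =
      Eps ^ r * PowerSeries.mk (fun m => Bb m / (m.factorial : ℂ)) := by
    refine mul_left_cancel₀ (pow_ne_zero r (PowerSeries.X_ne_zero (R := ℂ))) ?_
    rw [hBb, ← X_mul_Eps]
    ring
  have e7 : (PowerSeries.mk fun m => q.coeff m) =
      PowerSeries.mk (fun m => Bb m / (m.factorial : ℂ)) := by
    refine mul_right_cancel₀ (pow_ne_zero r Eps_ne) ?_
    rw [e5, e6]
    ring
  have hqcoeff : ∀ m, q.coeff m = Bb m / (m.factorial : ℂ) := by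
    intro m
    have := congrArg (PowerSeries.coeff m) e7
    simpa using this
  have hBbderiv : ∀ m, iteratedDeriv m G 0 = Bb m := by
    intro m
    rw [coeff_from_ball hq m, hqcoeff m, mul_div_cancel₀]
    exact_mod_cast Nat.cast_ne_zero.mpr m.factorial_ne_zero
  -- Taylor series of iteratedDeriv n G at c
  have hGanal : AnalyticOnNhd ℂ G (Metric.ball (0 : ℂ) (2 * π)) :=
    hGdiffOn.analyticOnNhd Metric.isOpen_ball
  have hHanal : ∀ k : ℕ, AnalyticOnNhd ℂ (iteratedDeriv k G) (Metric.ball (0 : ℂ) (2 * π)) := by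
    intro k
    induction k with
    | zero => simpa using hGanal
    | succ j ih => rw [iteratedDeriv_succ]; exact ih.deriv
  have hHdiffOn : DifferentiableOn ℂ (iteratedDeriv n G) (Metric.ball (0 : ℂ) (2 * π)) :=
    (hHanal n).differentiableOn
  have hcball : c ∈ Metric.ball (0 : ℂ) (2 * π) := by
    rw [Metric.mem_ball, dist_zero_right]; exact hcnorm
  have hT := Complex.hasSum_taylorSeries_on_ball hHdiffOn hcball
  have hT2 : HasSum (fun l : ℕ => Bb (n + l) * c ^ l / (l.factorial : ℂ))
      (iteratedDeriv n G c) := by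
    refine hT.congr_fun fun l => ?_
    rw [iteratedDeriv_iteratedDeriv, hBbderiv (n + l), sub_zero, smul_eq_mul, smul_eq_mul]
    ring
  -- the function F
  set F : ℂ → ℂ := fun t => Complex.exp (-(x * c)) * G (c + t) with hFdef
  set R2 : NNReal := Real.toNNReal ((2 * π - ‖c‖) / 2) with hR2def
  have hR2coe : (R2 : ℝ) = (2 * π - ‖c‖) / 2 := Real.coe_toNNReal _ (by linarith)
  have hR2pos : 0 < R2 := by
    rw [hR2def]
    exact Real.toNNReal_pos.mpr (by linarith)
  have hFdiffOn : DifferentiableOn ℂ F (Metric.closedBall (0 : ℂ) (R2 : ℝ)) := by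
    intro t ht
    rw [Metric.mem_closedBall, dist_zero_right, hR2coe] at ht
    have hmem : c + t ∈ Metric.ball (0 : ℂ) (2 * π) := by
      rw [Metric.mem_ball, dist_zero_right]
      calc ‖c + t‖ ≤ ‖c‖ + ‖t‖ := norm_add_le _ _
        _ < 2 * π := by linarith
    have hcomp : DifferentiableAt ℂ (fun t : ℂ => G (c + t)) t :=
      (hGdiff _ hmem).comp t ((differentiable_id.const_add c).differentiableAt)
    exact (hcomp.const_mul _).differentiableWithinAt
  have hq2 : HasFPowerSeriesOnBall F (cauchyPowerSeries F 0 R2) 0 R2 :=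
    hFdiffOn.hasFPowerSeriesOnBall hR2pos
  set q2 : FormalMultilinearSeries ℂ ℂ ℂ := cauchyPowerSeries F 0 R2 with hq2def
  have repF : Rep (PowerSeries.mk fun m => q2.coeff m) F :=
    rep_of_hasFPowerSeriesAt hq2.hasFPowerSeriesAt
  have replamexp : Rep (PowerSeries.C lam * PowerSeries.exp ℂ - 1)
      (fun t => lam * Complex.exp t - 1) := by
    have := ((rep_C lam).mul rep_exp).sub Rep.one
    simpa using this
  have e2' : ∀ᶠ t in 𝓝 (0 : ℂ), F t * (lam * Complex.exp t - 1) ^ r =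
      (c + t) ^ r * Complex.exp (x * t) := by
    filter_upwards [Metric.ball_mem_nhds (0 : ℂ) (by rw [hR2coe]; linarith : (0:ℝ) < (R2 : ℝ))]
      with t ht
    rw [Metric.mem_ball, dist_zero_right, hR2coe] at ht
    have hnorm : ‖c + t‖ < 2 * π := lt_of_le_of_lt (norm_add_le _ _) (by linarith)
    have hd : dfun (c + t) ≠ 0 := dfun_ne hnorm
    have hlamexp : lam * Complex.exp t - 1 = (c + t) * dfun (c + t) := by
      rw [z_mul_dfun, ← hexpc, ← Complex.exp_add]
    have hxsplit : Complex.exp (-(x * c)) * Complex.exp (x * (c + t)) = Complex.exp (x * t) := by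
      rw [← Complex.exp_add]
      congr 1
      ring
    rw [hlamexp, hFdef, hGdef]
    simp only []
    rw [mul_pow]
    field_simp
    linear_combination (c + t) ^ r * hxsplit
  have e3' : Rep ((PowerSeries.C c + PowerSeries.X) ^ r *
      PowerSeries.mk (fun m => x ^ m / (m.factorial : ℂ)))
      (fun t => (c + t) ^ r * Complex.exp (x * t)) := by
    have := (((rep_C c).add rep_X).pow r).mul (rep_exp_mul x)
    simpa using this
  have e5' : (PowerSeries.mk fun m => q2.coeff m) *
      (PowerSeries.C lam * PowerSeries.exp ℂ - 1) ^ r =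
      (PowerSeries.C c + PowerSeries.X) ^ r *
        PowerSeries.mk (fun m => x ^ m / (m.factorial : ℂ)) :=
    ((repF.mul (replamexp.pow r)).congr e2').unique e3'
  have hCne : (PowerSeries.C lam * PowerSeries.exp ℂ - 1 : PowerSeries ℂ) ≠ 0 := by
    intro h
    have h0 := congrArg (PowerSeries.constantCoeff) h
    simp only [map_sub, map_mul, PowerSeries.constantCoeff_C, PowerSeries.constantCoeff_exp,
      map_one, mul_one, map_zero] at h0
    exact h1 (by linear_combination h0)
  have e7' : (PowerSeries.mk fun m => q2.coeff m) =
      PowerSeries.mk (fun m => B m / (m.factorial : ℂ)) := by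
    refine mul_right_cancel₀ (pow_ne_zero r hCne) ?_
    rw [e5', hB]
    ring
  have hq2coeff : q2.coeff n = B n / (n.factorial : ℂ) := by
    have := congrArg (PowerSeries.coeff n) e7'
    simpa using this
  have hBn : B n = iteratedDeriv n F 0 := by
    rw [coeff_from_ball hq2 n, hq2coeff, mul_div_cancel₀]
    exact_mod_cast Nat.cast_ne_zero.mpr n.factorial_ne_zero
  have hFderiv : iteratedDeriv n F 0 = Complex.exp (-(x * c)) * iteratedDeriv n G c := by
    rw [hFdef]
    rw [iteratedDeriv_const_mul'' (Complex.exp (-(x * c))) (fun t => G (c + t)) n]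
    rw [iteratedDeriv_comp_const_add n G c]
    simp
  constructor
  · exact summable_norm_iff.mpr hT2.summable
  · rw [hBn, hFderiv, ← hT2.tsum_eq]
    congr 2
    ring
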